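/- Let v be a C^m function (m > 2) on B_r in R^d with bounded derivatives, satisfying: (i) the partial derivatives of v in directions 2,...,d vanish at 0, and (ii) there exist a, b > 0 with a |w(x)| <= |v(x)| <= b |w(x)| on B_r, where w(x) = -i x_1 + ||x'||^2. Set v_k(x) = v(D_k x) with D_k(x_1,...,x_d) = (x_1/4^k, x_2/2^k,...,x_d/2^k). Then there exist constants c, c', c'' > 0 such that for all large k, on tilde{Gamma}_0 = {x : 1/8 <= |w(x)| <= 2}: (a) all partial derivatives of v_k of order <= floor(m) are bounded by c * 4^{-k}; (b) all partial derivatives of order <= floor(m) - 1 are Lipschitz with constant at most c' * 4^{-k}; (c) all partial derivatives of order floor(m) have tau-Hölder seminorm at most c'' * 4^{-k}, where tau = m - floor(m). -/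

import Mathlib

noncomputable def w {n : ℕ} (x : ℝ × EuclideanSpace ℝ (Fin n)) : ℂ :=
  -Complex.I * (x.1 : ℂ) + (‖x.2‖ : ℂ) ^ 2

/-- The anisotropic dyadic scaling `D_k(x₁, x') = (x₁/4^k, x'/2^k)`. -/
noncomputable def Dk {n : ℕ} (k : ℕ) (x : ℝ × EuclideanSpace ℝ (Fin n)) :
    ℝ × EuclideanSpace ℝ (Fin n) :=
  (x.1 / (4 : ℝ) ^ k, ((2 : ℝ) ^ k)⁻¹ • x.2)

/-- `Γ̃₀ = {x : 1/8 ≤ |w x| ≤ 2}`. -/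
def GammaTilde0 {n : ℕ} : Set (ℝ × EuclideanSpace ℝ (Fin n)) :=
  {x | (1 / 8 : ℝ) ≤ ‖w x‖ ∧ ‖w x‖ ≤ 2}

/-- `Dk` as a continuous linear map. -/
noncomputable def DkL (n k : ℕ) :
    (ℝ × EuclideanSpace ℝ (Fin n)) →L[ℝ] (ℝ × EuclideanSpace ℝ (Fin n)) :=
  LinearMap.mkContinuous
    { toFun := Dk k
      map_add' := by
        intro x y
        simp only [Dk, Prod.fst_add, Prod.snd_add, Prod.mk_add_mk, Prod.mk.injEq]
        exact ⟨add_div _ _ _, smul_add _ _ _⟩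
      map_smul' := by
        intro c x
        simp only [Dk, Prod.smul_fst, Prod.smul_snd, Prod.smul_mk, RingHom.id_apply,
          smul_eq_mul, Prod.mk.injEq]
        exact ⟨by ring, smul_comm _ _ _⟩ }
    (((2 : ℝ) ^ k)⁻¹) (by
      intro x
      have h2 : (0:ℝ) < 2 ^ k := by positivity
      have h24 : (2:ℝ) ^ k ≤ 4 ^ k := pow_le_pow_left₀ (by norm_num) (by norm_num) k
      have hfst : ‖x.1 / (4:ℝ) ^ k‖ ≤ ((2:ℝ)^k)⁻¹ * ‖x‖ := by
        rw [norm_div, norm_pow]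
        have h : ‖x.1‖ / ‖(4:ℝ)‖ ^ k ≤ ‖x.1‖ / (2:ℝ)^k := by
          apply div_le_div_of_nonneg_left (norm_nonneg _) h2
          simpa using h24
        refine h.trans ?_
        rw [div_eq_inv_mul]
        exact mul_le_mul_of_nonneg_left (norm_fst_le x) (by positivity)
      have hsnd : ‖((2:ℝ)^k)⁻¹ • x.2‖ ≤ ((2:ℝ)^k)⁻¹ * ‖x‖ := by
        rw [norm_smul, norm_inv, norm_pow]
        simp only [Real.norm_ofNat]
        exact mul_le_mul_of_nonneg_left (norm_snd_le x) (by positivity)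
      calc ‖Dk k x‖ = max ‖x.1 / (4:ℝ)^k‖ ‖((2:ℝ)^k)⁻¹ • x.2‖ := Prod.norm_def _
        _ ≤ ((2:ℝ)^k)⁻¹ * ‖x‖ := max_le hfst hsnd)

lemma DkL_norm_le (n k : ℕ) (x : ℝ × EuclideanSpace ℝ (Fin n)) :
    ‖DkL n k x‖ ≤ ((2:ℝ)^k)⁻¹ * ‖x‖ := (DkL n k).le_of_opNorm_le
  (LinearMap.mkContinuous_norm_le _ (by positivity) _) x

lemma DkL_opNorm (n k : ℕ) : ‖DkL n k‖ ≤ ((2:ℝ)^k)⁻¹ :=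
  LinearMap.mkContinuous_norm_le _ (by positivity) _

lemma w_re {n : ℕ} (x : ℝ × EuclideanSpace ℝ (Fin n)) : (w x).re = ‖x.2‖ ^ 2 := by
  simp [w, ← Complex.ofReal_pow]

lemma w_im {n : ℕ} (x : ℝ × EuclideanSpace ℝ (Fin n)) : (w x).im = -x.1 := by
  simp [w, ← Complex.ofReal_pow]

lemma Gamma_norm_le {n : ℕ} {x : ℝ × EuclideanSpace ℝ (Fin n)}
    (hx : x ∈ GammaTilde0 (n := n)) : ‖x‖ ≤ 2 := by
  obtain ⟨-, h2⟩ := hx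
  have h1 : |x.1| ≤ 2 := by
    have h := Complex.abs_im_le_norm (w x)
    rw [w_im, abs_neg] at h
    linarith
  have hs : ‖x.2‖ ^ 2 ≤ 2 := by
    have h := Complex.abs_re_le_norm (w x)
    rw [w_re, abs_of_nonneg (by positivity)] at h
    linarith
  have h2' : ‖x.2‖ ≤ 2 := by nlinarith [norm_nonneg x.2]
  rw [Prod.norm_def]
  exact max_le (by simpa using h1) h2'

lemma w_Dk {n : ℕ} (k : ℕ) (x : ℝ × EuclideanSpace ℝ (Fin n)) :
    w (Dk k x) = ((((4:ℝ)^k)⁻¹ : ℝ) : ℂ) * w x := by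
  have h2 : ((2:ℂ)^k) * ((2:ℂ)^k) = (4:ℂ)^k := by rw [← mul_pow]; norm_num
  have h4 : ((4:ℂ)^k) ≠ 0 := pow_ne_zero _ (by norm_num)
  simp only [w, Dk, norm_smul, norm_inv, norm_pow, Real.norm_ofNat]
  push_cast
  rw [← h2]
  field_simp

lemma abs_w_Dk {n : ℕ} (k : ℕ) (x : ℝ × EuclideanSpace ℝ (Fin n)) :
    ‖w (Dk k x)‖ = ((4:ℝ)^k)⁻¹ * ‖w x‖ := by
  rw [w_Dk, norm_mul, Complex.norm_real, Real.norm_eq_abs, abs_of_nonneg (by positivity)]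

lemma Dk_decomp {n : ℕ} (k : ℕ) (z : ℝ × EuclideanSpace ℝ (Fin n)) :
    Dk k z = ((4:ℝ)^k)⁻¹ • ((z.1, (0:EuclideanSpace ℝ (Fin n))))
      + ((2:ℝ)^k)⁻¹ • (((0:ℝ), z.2)) := by
  apply Prod.ext
  · simp [Dk, div_eq_inv_mul]
  · simp [Dk]

set_option maxHeartbeats 2000000 in
/-- If `v ∈ C_b^m(B_r)` (`m > 2`) with (i) the partial derivatives of `v` at `0` in the
directions `2,…,d` vanishing, and (ii) `a|w| ≤ |v| ≤ b|w|` on `B_r`, then with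
`v_k = v ∘ D_k` there are `c, c', c'' > 0` such that for all `k` with `D_k(Γ̃₀) ⊆ B_r`,
on `Γ̃₀`: derivatives of `v_k` of order `≤ ⌊m⌋` are bounded by `c·4^{-k}`, those of order
`≤ ⌊m⌋ - 1` are Lipschitz with constant `c'·4^{-k}`, and those of order `⌊m⌋` are
`(m-⌊m⌋)`-Hölder with constant `c''·4^{-k}`. -/
theorem stmt17 {n : ℕ} (hn : 1 ≤ n) (r : ℝ) (hr : 0 < r) (m : ℝ) (hm : 2 < m)
    (v : ℝ × EuclideanSpace ℝ (Fin n) → ℂ) (a b : ℝ) (ha : 0 < a) (hb : 0 < b)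
    (hreg : ContDiffOn ℝ (⌊m⌋₊ : ℕ) v (Metric.ball 0 r))
    (hbdd : ∀ i ≤ ⌊m⌋₊, ∃ M : ℝ,
      ∀ x ∈ Metric.ball (0 : ℝ × EuclideanSpace ℝ (Fin n)) r,
        ‖iteratedFDerivWithin ℝ i v (Metric.ball 0 r) x‖ ≤ M)
    (hHol : ∃ H : ℝ, ∀ x ∈ Metric.ball (0 : ℝ × EuclideanSpace ℝ (Fin n)) r,
      ∀ y ∈ Metric.ball (0 : ℝ × EuclideanSpace ℝ (Fin n)) r,
        ‖iteratedFDerivWithin ℝ (⌊m⌋₊) v (Metric.ball 0 r) x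
          - iteratedFDerivWithin ℝ (⌊m⌋₊) v (Metric.ball 0 r) y‖
          ≤ H * ‖x - y‖ ^ (m - ⌊m⌋₊))
    (hi : ∀ y : EuclideanSpace ℝ (Fin n),
      fderivWithin ℝ v (Metric.ball 0 r) 0 ((0 : ℝ), y) = 0)
    (hii : ∀ x ∈ Metric.ball (0 : ℝ × EuclideanSpace ℝ (Fin n)) r,
      a * ‖w x‖ ≤ ‖v x‖ ∧
      ‖v x‖ ≤ b * ‖w x‖) :
    ∃ c > (0 : ℝ), ∃ c' > (0 : ℝ), ∃ c'' > (0 : ℝ), ∀ k : ℕ,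
      (∀ x ∈ GammaTilde0 (n := n), Dk k x ∈ Metric.ball (0 : ℝ × EuclideanSpace ℝ (Fin n)) r) →
      (∀ i ≤ ⌊m⌋₊, ∀ x ∈ GammaTilde0 (n := n),
        ‖iteratedFDerivWithin ℝ i (fun z => v (Dk k z)) (Dk k ⁻¹' Metric.ball 0 r) x‖
          ≤ c / 4 ^ k) ∧
      (∀ i ≤ ⌊m⌋₊ - 1, ∀ x ∈ GammaTilde0 (n := n), ∀ y ∈ GammaTilde0 (n := n),
        ‖iteratedFDerivWithin ℝ i (fun z => v (Dk k z)) (Dk k ⁻¹' Metric.ball 0 r) x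
          - iteratedFDerivWithin ℝ i (fun z => v (Dk k z)) (Dk k ⁻¹' Metric.ball 0 r) y‖
          ≤ (c' / 4 ^ k) * ‖x - y‖) ∧
      (∀ x ∈ GammaTilde0 (n := n), ∀ y ∈ GammaTilde0 (n := n),
        ‖iteratedFDerivWithin ℝ (⌊m⌋₊) (fun z => v (Dk k z)) (Dk k ⁻¹' Metric.ball 0 r) x
          - iteratedFDerivWithin ℝ (⌊m⌋₊) (fun z => v (Dk k z)) (Dk k ⁻¹' Metric.ball 0 r) y‖
          ≤ (c'' / 4 ^ k) * ‖x - y‖ ^ (m - ⌊m⌋₊)) := by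
  classical
  set s : Set (ℝ × EuclideanSpace ℝ (Fin n)) := Metric.ball 0 r with hs_def
  set N := ⌊m⌋₊ with hN_def
  have hN2 : 2 ≤ N := Nat.le_floor (by exact_mod_cast hm.le)
  have hτ0 : 0 ≤ m - (N:ℝ) := sub_nonneg.2 (Nat.floor_le (by linarith))
  have h0s : (0 : ℝ × EuclideanSpace ℝ (Fin n)) ∈ s := Metric.mem_ball_self hr
  have hsU : UniqueDiffOn ℝ s := Metric.isOpen_ball.uniqueDiffOn
  have hconv : Convex ℝ s := convex_ball 0 r
  -- uniform bound M on derivatives up to order N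
  have hbdd' : ∀ i : ℕ, ∃ Mi : ℝ, ∀ x ∈ s, i ≤ N →
      ‖iteratedFDerivWithin ℝ i v s x‖ ≤ Mi := by
    intro i
    by_cases hiN : i ≤ N
    · obtain ⟨Mi, hMi⟩ := hbdd i hiN
      exact ⟨Mi, fun x hx _ => hMi x hx⟩
    · exact ⟨0, fun x hx h => absurd h hiN⟩
  choose Mf hMf using hbdd'
  set M : ℝ := ∑ i ∈ Finset.range (N+1), |Mf i| with hM_def
  have hM0 : 0 ≤ M := Finset.sum_nonneg fun i _ => abs_nonneg _
  have hM : ∀ i, i ≤ N → ∀ x ∈ s, ‖iteratedFDerivWithin ℝ i v s x‖ ≤ M := by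
    intro i hiN x hx
    refine (hMf i x hx hiN).trans ((le_abs_self _).trans ?_)
    exact Finset.single_le_sum (f := fun j => |Mf j|) (fun j _ => abs_nonneg _)
      (Finset.mem_range.2 (by omega))
  obtain ⟨H, hH⟩ := hHol
  have hH' : ∀ x ∈ s, ∀ y ∈ s,
      ‖iteratedFDerivWithin ℝ N v s x - iteratedFDerivWithin ℝ N v s y‖
        ≤ (|H| + 1) * ‖x - y‖ ^ (m - (N:ℝ)) := by
    intro x hx y hy
    refine (hH x hx y hy).trans (mul_le_mul_of_nonneg_right
      (by cases abs_cases H <;> linarith) (Real.rpow_nonneg (norm_nonneg _) _))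
  set L := fderivWithin ℝ v s 0 with hL_def
  -- first derivative bound
  have hfd1 : ∀ u ∈ s, ‖fderivWithin ℝ v s u‖ ≤ M := by
    intro u hu
    refine ContinuousLinearMap.opNorm_le_bound _ hM0 fun e => ?_
    have h1 : ‖fderivWithin ℝ v s u e‖ = ‖iteratedFDerivWithin ℝ 1 v s u (fun _ => e)‖ := by
      rw [iteratedFDerivWithin_one_apply (hsU u hu)]
    rw [h1]
    refine (ContinuousMultilinearMap.le_opNorm _ _).trans ?_
    simp only [Finset.prod_const, Finset.card_univ, Fintype.card_fin, pow_one]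
    exact mul_le_mul_of_nonneg_right (hM 1 (by omega) u hu) (norm_nonneg _)
  -- second derivative bound
  have hfd2 : ∀ u ∈ s, ‖fderivWithin ℝ (fderivWithin ℝ v s) s u‖ ≤ M := by
    intro u hu
    refine ContinuousLinearMap.opNorm_le_bound _ hM0 fun e₁ => ?_
    refine ContinuousLinearMap.opNorm_le_bound _ (by positivity) fun e₂ => ?_
    have h2 : fderivWithin ℝ (fderivWithin ℝ v s) s u e₁ e₂
        = iteratedFDerivWithin ℝ 2 v s u ![e₁, e₂] := by
      rw [iteratedFDerivWithin_two_apply v hsU hu]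
      simp
    rw [h2]
    refine (ContinuousMultilinearMap.le_opNorm _ _).trans ?_
    simp only [Fin.prod_univ_two, Matrix.cons_val_zero, Matrix.cons_val_one, Matrix.head_cons]
    rw [← mul_assoc]
    exact mul_le_mul_of_nonneg_right
      (mul_le_mul_of_nonneg_right (hM 2 hN2 u hu) (norm_nonneg _)) (norm_nonneg _)
  have hvdiff : DifferentiableOn ℝ v s :=
    hreg.differentiableOn (by exact_mod_cast (by omega : N ≠ 0))
  have hdfd : DifferentiableOn ℝ (fderivWithin ℝ v s) s := by
    have h : ContDiffOn ℝ 1 (fun y => fderivWithin ℝ v s y) s :=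
      hreg.fderivWithin hsU (by exact_mod_cast (by omega : 1 + 1 ≤ N))
    exact h.differentiableOn one_ne_zero
  have hLipL : ∀ u ∈ s, ‖fderivWithin ℝ v s u - L‖ ≤ M * ‖u‖ := by
    intro u hu
    have h := hconv.norm_image_sub_le_of_norm_fderivWithin_le hdfd hfd2 h0s hu
    simpa using h
  refine ⟨2*b + 3*M + 1, by positivity, 3*M + ‖L‖ + 1, by positivity, |H| + 1, by positivity, ?_⟩
  intro k hk
  set A := DkL n k with hA_def
  set U : Set (ℝ × EuclideanSpace ℝ (Fin n)) := Dk k ⁻¹' s with hU_def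
  have hΓU : ∀ x ∈ GammaTilde0 (n := n), x ∈ U := fun x hx => hk x hx
  have hUopen : IsOpen U := Metric.isOpen_ball.preimage A.continuous
  have hUu : UniqueDiffOn ℝ U := hUopen.uniqueDiffOn
  have hUconv : Convex ℝ U := by have := hconv.linear_preimage A.toLinearMap; exact this
  set t := ((2:ℝ)^k)⁻¹ with ht_def
  have ht0 : (0:ℝ) < t := by rw [ht_def]; positivity
  have ht1 : t ≤ 1 := by
    rw [ht_def]
    exact inv_le_one_of_one_le₀ (one_le_pow₀ (by norm_num))
  have htt : t * t = ((4:ℝ)^k)⁻¹ := by rw [ht_def, ← mul_inv, ← mul_pow]; norm_num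
  have hnormA : ‖A‖ ≤ t := DkL_opNorm n k
  have hAle : ∀ z, ‖A z‖ ≤ t * ‖z‖ := DkL_norm_le n k
  have h4 : (0:ℝ) < ((4:ℝ)^k)⁻¹ := by positivity
  have hvk : ContDiffOn ℝ N (fun z => v (Dk k z)) U := hreg.comp_continuousLinearMap A
  have hchain : ∀ i, i ≤ N → ∀ x ∈ U,
      iteratedFDerivWithin ℝ i (fun z => v (Dk k z)) U x
        = (iteratedFDerivWithin ℝ i v s (A x)).compContinuousLinearMap (fun _ => A) :=
    fun i hiN x hx => A.iteratedFDerivWithin_comp_right hreg hsU hUu hx (by exact_mod_cast hiN)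
  -- bound for orders ≥ 2, valid on all of U
  have hbig : ∀ i, 2 ≤ i → i ≤ N → ∀ x ∈ U,
      ‖iteratedFDerivWithin ℝ i (fun z => v (Dk k z)) U x‖ ≤ M * ((4:ℝ)^k)⁻¹ := by
    intro i h2i hiN x hx
    rw [hchain i hiN x hx]
    refine (ContinuousMultilinearMap.norm_compContinuousLinearMap_le _ _).trans ?_
    have hx' : A x ∈ s := hx
    have hA_pow : (∏ _j : Fin i, ‖A‖) ≤ t ^ i := by
      rw [Finset.prod_const, Finset.card_univ, Fintype.card_fin]
      exact pow_le_pow_left₀ (norm_nonneg _) hnormA i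
    have hti : t ^ i ≤ ((4:ℝ)^k)⁻¹ := by
      calc t ^ i ≤ t ^ 2 := pow_le_pow_of_le_one ht0.le ht1 h2i
        _ = ((4:ℝ)^k)⁻¹ := by rw [pow_two, htt]
    have hprod0 : (0:ℝ) ≤ ∏ _j : Fin i, ‖A‖ := Finset.prod_nonneg fun _ _ => norm_nonneg _
    exact mul_le_mul (hM i hiN _ hx') (hA_pow.trans hti) hprod0 hM0
  -- bound for order 1, on Γ̃₀
  have hone : ∀ x ∈ GammaTilde0 (n := n),
      ‖iteratedFDerivWithin ℝ 1 (fun z => v (Dk k z)) U x‖ ≤ 3*M * ((4:ℝ)^k)⁻¹ := by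
    intro x hxΓ
    have hxU : x ∈ U := hΓU x hxΓ
    have hu : A x ∈ s := hxU
    have hun : ‖A x‖ ≤ 2 * t := by
      calc ‖A x‖ ≤ t * ‖x‖ := hAle x
        _ ≤ t * 2 := mul_le_mul_of_nonneg_left (Gamma_norm_le hxΓ) ht0.le
        _ = 2 * t := mul_comm _ _
    rw [hchain 1 (by omega) x hxU]
    refine ContinuousMultilinearMap.opNorm_le_bound (by positivity) fun e => ?_
    simp only [Fin.prod_univ_one]
    rw [ContinuousMultilinearMap.compContinuousLinearMap_apply,
      iteratedFDerivWithin_one_apply (hsU _ hu)]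
    set z := e 0 with hz_def
    set G := fderivWithin ℝ v s (A x) with hG_def
    have hdz : A z = ((4:ℝ)^k)⁻¹ • ((z.1, (0:EuclideanSpace ℝ (Fin n))))
        + t • (((0:ℝ), z.2)) := Dk_decomp k z
    have hGz : G (A z) = ((4:ℝ)^k)⁻¹ • G (z.1, 0) + t • G (0, z.2) := by
      rw [hdz, map_add, map_smul, map_smul]
    have hzfst : ‖((z.1, (0:EuclideanSpace ℝ (Fin n))) : ℝ × EuclideanSpace ℝ (Fin n))‖ ≤ ‖z‖ := by
      rw [Prod.norm_def]
      simp only [norm_zero]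
      rw [max_eq_left (norm_nonneg _)]
      exact norm_fst_le z
    have hzsnd : ‖(((0:ℝ), z.2) : ℝ × EuclideanSpace ℝ (Fin n))‖ ≤ ‖z‖ := by
      rw [Prod.norm_def]
      simp only [norm_zero]
      rw [max_eq_right (norm_nonneg _)]
      exact norm_snd_le z
    have hb1 : ‖G (z.1, 0)‖ ≤ M * ‖z‖ := by
      refine (G.le_opNorm _).trans ?_
      exact mul_le_mul (hfd1 _ hu) hzfst (norm_nonneg _) hM0
    have hb2 : ‖G (0, z.2)‖ ≤ M * (2*t) * ‖z‖ := by
      have hL0 : L (0, z.2) = 0 := hi z.2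
      have hGL : G (0, z.2) = (G - L) (0, z.2) := by
        simp [ContinuousLinearMap.sub_apply, hL0]
      rw [hGL]
      refine ((G - L).le_opNorm _).trans ?_
      have hGLn : ‖G - L‖ ≤ M * (2*t) := (hLipL _ hu).trans
        (mul_le_mul_of_nonneg_left hun hM0)
      exact mul_le_mul hGLn hzsnd (norm_nonneg _) (by positivity)
    have hexp : t * (M * (2*t) * ‖z‖) = 2*M*((4:ℝ)^k)⁻¹*‖z‖ := by rw [← htt]; ring
    calc ‖G (A z)‖ ≤ ((4:ℝ)^k)⁻¹ * ‖G (z.1, 0)‖ + t * ‖G (0, z.2)‖ := by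
          rw [hGz]
          refine (norm_add_le _ _).trans ?_
          rw [norm_smul, norm_smul, Real.norm_eq_abs, Real.norm_eq_abs,
            abs_of_nonneg h4.le, abs_of_nonneg ht0.le]
      _ ≤ ((4:ℝ)^k)⁻¹ * (M * ‖z‖) + t * (M * (2*t) * ‖z‖) := by
          refine add_le_add (mul_le_mul_of_nonneg_left hb1 h4.le)
            (mul_le_mul_of_nonneg_left hb2 ht0.le)
      _ = 3*M*((4:ℝ)^k)⁻¹ * ‖z‖ := by rw [hexp]; ring
  -- bound for order 0, on Γ̃₀
  have hzero : ∀ x ∈ GammaTilde0 (n := n),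
      ‖iteratedFDerivWithin ℝ 0 (fun z => v (Dk k z)) U x‖ ≤ 2*b * ((4:ℝ)^k)⁻¹ := by
    intro x hxΓ
    rw [norm_iteratedFDerivWithin_zero]
    show ‖v (Dk k x)‖ ≤ _
    calc ‖v (Dk k x)‖ ≤ b * ‖w (Dk k x)‖ := (hii _ (hk x hxΓ)).2
      _ = b * (((4:ℝ)^k)⁻¹ * ‖w x‖) := by rw [abs_w_Dk]
      _ ≤ b * (((4:ℝ)^k)⁻¹ * 2) := by
          refine mul_le_mul_of_nonneg_left (mul_le_mul_of_nonneg_left hxΓ.2 h4.le) hb.le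
      _ = 2*b * ((4:ℝ)^k)⁻¹ := by ring
  refine ⟨?_, ?_, ?_⟩
  · -- part (a)
    intro i hiN x hxΓ
    have hstep : ∀ K : ℝ, K ≤ 2*b + 3*M →
        ‖iteratedFDerivWithin ℝ i (fun z => v (Dk k z)) U x‖ ≤ K * ((4:ℝ)^k)⁻¹ →
        ‖iteratedFDerivWithin ℝ i (fun z => v (Dk k z)) U x‖ ≤ (2*b + 3*M + 1) / 4 ^ k := by
      intro K hK hle
      rw [div_eq_mul_inv]
      exact hle.trans (mul_le_mul_of_nonneg_right (by linarith) h4.le)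
    match i, hiN with
    | 0, _ => exact hstep (2*b) (by linarith) (hzero x hxΓ)
    | 1, _ => exact hstep (3*M) (by linarith) (hone x hxΓ)
    | (j+2), hiN => exact hstep M (by linarith) (hbig (j+2) (by omega) hiN x (hΓU x hxΓ))
  · -- part (b)
    intro i hiN x hxΓ y hyΓ
    rcases Nat.eq_zero_or_pos i with rfl | hipos
    · -- order 0 : use the linear-part subtraction trick
      have hxy0 : ‖iteratedFDerivWithin ℝ 0 (fun z => v (Dk k z)) U x
          - iteratedFDerivWithin ℝ 0 (fun z => v (Dk k z)) U y‖ = ‖v (A x) - v (A y)‖ := by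
        rw [iteratedFDerivWithin_zero_eq_comp, Function.comp_apply, Function.comp_apply,
          ← map_sub, LinearIsometryEquiv.norm_map]
        rfl
      rw [hxy0]
      set S : Set (ℝ × EuclideanSpace ℝ (Fin n)) := s ∩ Metric.closedBall 0 (2*t) with hS_def
      have hSconv : Convex ℝ S := hconv.inter (convex_closedBall _ _)
      have hAmem : ∀ z ∈ GammaTilde0 (n := n), A z ∈ S := by
        intro z hz
        refine ⟨hΓU z hz, ?_⟩
        rw [Metric.mem_closedBall, dist_zero_right]
        calc ‖A z‖ ≤ t * ‖z‖ := hAle z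
          _ ≤ t * 2 := mul_le_mul_of_nonneg_left (Gamma_norm_le hz) ht0.le
          _ = 2 * t := mul_comm _ _
      have hφ : ∀ u ∈ S, HasFDerivWithinAt (fun p => v p - L p)
          (fderivWithin ℝ v s u - L) S u := fun u hu =>
        (((hvdiff u hu.1).hasFDerivWithinAt).mono Set.inter_subset_left).sub
          L.hasFDerivWithinAt
      have hφb : ∀ u ∈ S, ‖fderivWithin ℝ v s u - L‖ ≤ M * (2*t) := fun u hu =>
        (hLipL u hu.1).trans (mul_le_mul_of_nonneg_left
          (by rw [← dist_zero_right]; exact Metric.mem_closedBall.1 hu.2) hM0)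
      have hmv := hSconv.norm_image_sub_le_of_norm_hasFDerivWithin_le hφ hφb
        (hAmem y hyΓ) (hAmem x hxΓ)
      have hAxy : ‖A x - A y‖ ≤ t * ‖x - y‖ := by
        rw [← map_sub]; exact hAle _
      have hLpart : ‖L (A x) - L (A y)‖ ≤ ‖L‖ * (((4:ℝ)^k)⁻¹ * ‖x - y‖) := by
        have h1 : L (A x) - L (A y) = ((4:ℝ)^k)⁻¹ • L ((x-y).1, 0) := by
          have h0 : A (x - y) = Dk k (x - y) := rfl
          rw [← map_sub, ← map_sub, h0, Dk_decomp k (x - y), map_add, map_smul, map_smul,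
            hi (x-y).2, smul_zero, add_zero]
        rw [h1, norm_smul, Real.norm_eq_abs, abs_of_nonneg h4.le]
        have h2 : ‖L ((x-y).1, (0:EuclideanSpace ℝ (Fin n)))‖ ≤ ‖L‖ * ‖x - y‖ := by
          refine (L.le_opNorm _).trans (mul_le_mul_of_nonneg_left ?_ (norm_nonneg _))
          rw [Prod.norm_def]
          simp only [norm_zero]
          rw [max_eq_left (norm_nonneg _)]
          exact norm_fst_le (x - y)
        calc ((4:ℝ)^k)⁻¹ * ‖L ((x-y).1, (0:EuclideanSpace ℝ (Fin n)))‖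
            ≤ ((4:ℝ)^k)⁻¹ * (‖L‖ * ‖x - y‖) := mul_le_mul_of_nonneg_left h2 h4.le
          _ = ‖L‖ * (((4:ℝ)^k)⁻¹ * ‖x - y‖) := by ring
      calc ‖v (A x) - v (A y)‖
          ≤ ‖(v (A x) - L (A x)) - (v (A y) - L (A y))‖ + ‖L (A x) - L (A y)‖ := by
            have heq : v (A x) - v (A y)
                = ((v (A x) - L (A x)) - (v (A y) - L (A y))) + (L (A x) - L (A y)) := by ring
            rw [heq]
            exact norm_add_le _ _
        _ ≤ M * (2*t) * ‖A x - A y‖ + ‖L‖ * (((4:ℝ)^k)⁻¹ * ‖x - y‖) := add_le_add hmv hLpart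
        _ ≤ M * (2*t) * (t * ‖x - y‖) + ‖L‖ * (((4:ℝ)^k)⁻¹ * ‖x - y‖) := by
            exact add_le_add_left (mul_le_mul_of_nonneg_left hAxy (by positivity)) _
        _ = (2*M*((4:ℝ)^k)⁻¹ + ‖L‖*((4:ℝ)^k)⁻¹) * ‖x - y‖ := by rw [← htt]; ring
        _ ≤ ((3*M + ‖L‖ + 1) / 4 ^ k) * ‖x - y‖ := by
            refine mul_le_mul_of_nonneg_right ?_ (norm_nonneg _)
            rw [div_eq_mul_inv]
            nlinarith [norm_nonneg L, mul_nonneg (by linarith : (0:ℝ) ≤ M + 1) h4.le]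
    · -- order ≥ 1 : mean value on the convex set U
      have hi1 : i + 1 ≤ N := by omega
      have hdiff : DifferentiableOn ℝ
          (iteratedFDerivWithin ℝ i (fun z => v (Dk k z)) U) U :=
        hvk.differentiableOn_iteratedFDerivWithin (by exact_mod_cast (by omega : i < N)) hUu
      have hbound : ∀ z ∈ U,
          ‖fderivWithin ℝ (iteratedFDerivWithin ℝ i (fun z => v (Dk k z)) U) U z‖
            ≤ M * ((4:ℝ)^k)⁻¹ := by
        intro z hz
        rw [norm_fderivWithin_iteratedFDerivWithin]
        exact hbig (i+1) (by omega) hi1 z hz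
      have h := hUconv.norm_image_sub_le_of_norm_fderivWithin_le hdiff hbound
        (hΓU y hyΓ) (hΓU x hxΓ)
      refine h.trans ?_
      refine mul_le_mul_of_nonneg_right ?_ (norm_nonneg _)
      rw [div_eq_mul_inv]
      nlinarith [norm_nonneg L, mul_nonneg (by linarith [hM0, norm_nonneg L] : (0:ℝ) ≤ 2*M + ‖L‖ + 1) h4.le]
  · -- part (c)
    intro x hxΓ y hyΓ
    have hxU : x ∈ U := hΓU x hxΓ
    have hyU : y ∈ U := hΓU y hyΓ
    rw [hchain N le_rfl x hxU, hchain N le_rfl y hyU]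
    have hsubC : (iteratedFDerivWithin ℝ N v s (A x)).compContinuousLinearMap (fun _ => A)
        - (iteratedFDerivWithin ℝ N v s (A y)).compContinuousLinearMap (fun _ => A)
        = ((iteratedFDerivWithin ℝ N v s (A x))
            - (iteratedFDerivWithin ℝ N v s (A y))).compContinuousLinearMap (fun _ => A) := by
      ext e
      simp [ContinuousMultilinearMap.compContinuousLinearMap_apply,
        ContinuousMultilinearMap.sub_apply]
    rw [hsubC]
    refine (ContinuousMultilinearMap.norm_compContinuousLinearMap_le _ _).trans ?_
    have hprod : (∏ _j : Fin N, ‖A‖) ≤ t ^ N := by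
      rw [Finset.prod_const, Finset.card_univ, Fintype.card_fin]
      exact pow_le_pow_left₀ (norm_nonneg _) hnormA N
    have hprod0 : (0:ℝ) ≤ ∏ _j : Fin N, ‖A‖ := Finset.prod_nonneg fun _ _ => norm_nonneg _
    have hdiffb := hH' (A x) hxU (A y) hyU
    have hAxy : ‖A x - A y‖ ≤ t * ‖x - y‖ := by rw [← map_sub]; exact hAle _
    have hrp : ‖A x - A y‖ ^ (m - (N:ℝ)) ≤ t ^ (m - (N:ℝ)) * ‖x - y‖ ^ (m - (N:ℝ)) := by
      calc ‖A x - A y‖ ^ (m - (N:ℝ)) ≤ (t * ‖x - y‖) ^ (m - (N:ℝ)) :=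
            Real.rpow_le_rpow (norm_nonneg _) hAxy hτ0
        _ = _ := Real.mul_rpow ht0.le (norm_nonneg _)
    have hkey : t ^ (m - (N:ℝ)) * t ^ N ≤ ((4:ℝ)^k)⁻¹ := by
      rw [← Real.rpow_natCast t N, ← Real.rpow_add ht0]
      have hmm : m - (N:ℝ) + N = m := by ring
      rw [hmm]
      calc t ^ (m : ℝ) ≤ t ^ (2:ℝ) := Real.rpow_le_rpow_of_exponent_ge ht0 ht1 hm.le
        _ = ((4:ℝ)^k)⁻¹ := by
            rw [show ((2:ℝ)) = ((2:ℕ):ℝ) from by norm_num, Real.rpow_natCast, pow_two, htt]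
    calc ‖iteratedFDerivWithin ℝ N v s (A x) - iteratedFDerivWithin ℝ N v s (A y)‖
          * ∏ _j : Fin N, ‖A‖
        ≤ ((|H| + 1) * ‖A x - A y‖ ^ (m - (N:ℝ))) * t ^ N := by
          refine mul_le_mul hdiffb hprod hprod0 ?_
          positivity
      _ ≤ ((|H| + 1) * (t ^ (m - (N:ℝ)) * ‖x - y‖ ^ (m - (N:ℝ)))) * t ^ N := by
          refine mul_le_mul_of_nonneg_right (mul_le_mul_of_nonneg_left hrp (by positivity)) ?_
          positivity
      _ = (|H| + 1) * (t ^ (m - (N:ℝ)) * t ^ N) * ‖x - y‖ ^ (m - (N:ℝ)) := by ring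
      _ ≤ (|H| + 1) * ((4:ℝ)^k)⁻¹ * ‖x - y‖ ^ (m - (N:ℝ)) := by
          refine mul_le_mul_of_nonneg_right (mul_le_mul_of_nonneg_left hkey (by positivity)) ?_
          positivity
      _ = ((|H| + 1) / 4 ^ k) * ‖x - y‖ ^ (m - (N:ℝ)) := by rw [div_eq_mul_inv]
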